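/- For every n ≥ 2 and every permutation σ of Fin n, the list L(σ) has length n(n−1), and its cyclic edge sequence contains every ordered pair (u, v) of distinct elements of Fin n exactly once; that is, L(σ) is the vertex list of an Eulerian circuit of the complete digraph on n vertices. -/

import Mathlib

/-- The vertex list produced by the stochastic Hierholzer construction: for
`i = n−1, n−2, …, 1` (in decreasing order), concatenate the blocks
`[σ(0), σ(i), σ(1), σ(i), …, σ(i−1), σ(i)]`. -/
def hierList (n : ℕ) (hn : 2 ≤ n) (σ : Equiv.Perm (Fin n)) : List (Fin n) :=
  ((List.range (n - 1)).reverse).flatMap fun i =>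
    (List.range (i + 1)).flatMap fun j =>
      [σ ⟨j % n, Nat.mod_lt _ (by omega)⟩, σ ⟨(i + 1) % n, Nat.mod_lt _ (by omega)⟩]

/-- The cyclic edge sequence of a list `[a₀, …, a_{N−1}]`:
`(a₀,a₁), (a₁,a₂), …, (a_{N−1},a₀)`. -/
def cyclicEdges {α : Type*} (L : List α) : List (α × α) := L.zip (L.rotate 1)

namespace HierAux
open List

/-- unpermuted vertex list over ℕ -/
def Lnat (m : ℕ) : List ℕ :=
  ((List.range m).reverse).flatMap fun i => (List.range (i+1)).flatMap fun j => [j, i+1]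

/-- target edge list -/
def Enat (m : ℕ) : List (ℕ × ℕ) :=
  ((List.range m).reverse).flatMap fun i =>
    (List.range (i+1)).flatMap fun j => [(j, i+1), (i+1, j)]

def block (p k : ℕ) : List ℕ := (List.range k).flatMap fun j => [j, p]

lemma Lnat_succ (m : ℕ) : Lnat (m+1) = block (m+1) (m+1) ++ Lnat m := by
  simp [Lnat, block, List.range_succ]

lemma Enat_succ (m : ℕ) :
    Enat (m+1) = ((List.range (m+1)).flatMap fun j => [(j, m+1), (m+1, j)]) ++ Enat m := by
  simp [Enat, List.range_succ]

lemma block_succ (p k : ℕ) : block p (k+1) = block p k ++ [k, p] := by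
  simp [block, List.range_succ]

lemma block_one (p : ℕ) : block p 1 = [0, p] := by simp [block, List.range_succ]

lemma block_ne_nil (p k : ℕ) (hk : 1 ≤ k) : block p k ≠ [] := by
  obtain ⟨k, rfl⟩ := Nat.exists_eq_add_of_le' hk
  simp [block_succ]

lemma block_head (p k : ℕ) (hk : 1 ≤ k) : ∃ t, block p k = 0 :: t := by
  induction k with
  | zero => omega
  | succ k ih =>
    rcases Nat.eq_or_lt_of_le hk with h | h
    · exact ⟨[p], by simp [block_one, ← h]⟩
    · obtain ⟨t, ht⟩ := ih (by omega)
      exact ⟨t ++ [k, p], by simp [block_succ, ht]⟩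

lemma block_getLast (p k : ℕ) (hk : 1 ≤ k) (h : block p k ≠ []) :
    (block p k).getLast h = p := by
  obtain ⟨k, rfl⟩ := Nat.exists_eq_add_of_le' hk
  have h2 : (block p (k+1)).getLast? = some p := by
    rw [block_succ, show block p k ++ [k, p] = (block p k ++ [k]) ++ [p] by simp,
      List.getLast?_concat]
  rw [List.getLast?_eq_getLast h] at h2
  exact Option.some_injective _ h2

lemma Lnat_head (m : ℕ) (hm : 1 ≤ m) : ∃ t, Lnat m = 0 :: t := by
  induction m with
  | zero => omega
  | succ m ih =>
    obtain ⟨t, ht⟩ := block_head (m+1) (m+1) (by omega)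
    exact ⟨t ++ Lnat m, by simp [Lnat_succ, ht]⟩

lemma Lnat_ne_nil (m : ℕ) (hm : 1 ≤ m) : Lnat m ≠ [] := by
  obtain ⟨t, ht⟩ := Lnat_head m hm; simp [ht]

lemma Lnat_getLast? (m : ℕ) (hm : 1 ≤ m) : (Lnat m).getLast? = some 1 := by
  induction m with
  | zero => omega
  | succ m ih =>
    rcases Nat.eq_or_lt_of_le hm with h | h
    · rw [show m = 0 by omega]
      have : Lnat 1 = block 1 1 ++ Lnat 0 := Lnat_succ 0
      rw [this, block_one]
      simp [Lnat]
    · rw [Lnat_succ, List.getLast?_append_of_ne_nil _ (Lnat_ne_nil m (by omega))]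
      exact ih (by omega)

lemma Lnat_getLast (m : ℕ) (hm : 1 ≤ m) (h : Lnat m ≠ []) : (Lnat m).getLast h = 1 := by
  have h2 := Lnat_getLast? m hm
  rw [List.getLast?_eq_getLast h] at h2
  exact Option.some_injective _ h2

end HierAux

namespace HierAux
open List

def lin {α : Type*} (L : List α) : List (α × α) := L.zip L.tail

lemma lin_cons₂ {α : Type*} (a b : α) (l : List α) :
    lin (a :: b :: l) = (a, b) :: lin (b :: l) := rfl

lemma lin_append {α : Type*} : ∀ (X : List α) (hx : X ≠ []) (y : α) (Y : List α),
    lin (X ++ y :: Y) = lin X ++ (X.getLast hx, y) :: lin (y :: Y)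
  | [a], _, y, Y => by simp [lin]
  | a :: b :: X', _, y, Y => by
    have ih := lin_append (b :: X') (by simp) y Y
    have h1 : lin ((a :: b :: X') ++ y :: Y) = (a, b) :: lin ((b :: X') ++ y :: Y) := rfl
    rw [h1, ih, lin_cons₂]
    simp [List.getLast_cons]

lemma zip_tail_concat {α : Type*} : ∀ (L : List α) (hL : L ≠ []) (x : α),
    L.zip (L.tail ++ [x]) = lin L ++ [(L.getLast hL, x)]
  | [a], _, x => by simp [lin]
  | a :: b :: t, _, x => by
    have ih := zip_tail_concat (b :: t) (by simp) x
    have h1 : (a :: b :: t).tail = b :: t := rfl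
    have h2 : (a :: b :: t).zip ((b :: t) ++ [x]) = (a, b) :: (b :: t).zip ((b :: t).tail ++ [x]) := rfl
    rw [h1, h2, ih, lin_cons₂]
    simp [List.getLast_cons]

lemma cyclicEdges_eq {α : Type*} (L : List α) (h : L ≠ []) :
    cyclicEdges L = lin L ++ [(L.getLast h, L.head h)] := by
  cases L with
  | nil => simp at h
  | cons a t =>
    have hrot : (a :: t).rotate 1 = t ++ [a] := by
      rw [List.rotate_cons_succ, List.rotate_zero]
    rw [cyclicEdges, hrot, show t ++ [a] = (a :: t).tail ++ [a] from rfl,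
      zip_tail_concat (a :: t) (by simp) a]
    simp

end HierAux

namespace HierAux
open List

lemma count_block_edges (p : ℕ) : ∀ k, 1 ≤ k → ∀ x : ℕ × ℕ,
    count x (lin (block p k)) + count x [(p, 0)] =
      count x ((List.range k).flatMap fun j => [(j, p), (p, j)]) := by
  intro k
  induction k with
  | zero => omega
  | succ k ih =>
    intro _ x
    rcases Nat.eq_zero_or_pos k with rfl | hk
    · rw [block_one]
      simp [lin, List.range_succ, List.count_cons]
      omega
    · have hlast := block_getLast p k hk (block_ne_nil p k hk)
      have hlin : lin (block p (k+1)) = lin (block p k) ++ (p, k) :: lin [k, p] := by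
        rw [block_succ, show ([k, p] : List ℕ) = k :: [p] from rfl,
          lin_append (block p k) (block_ne_nil p k hk) k [p], hlast]
      have hrhs : ((List.range (k+1)).flatMap fun j => [(j, p), (p, j)]) =
          ((List.range k).flatMap fun j => [(j, p), (p, j)]) ++ [(k, p), (p, k)] := by
        simp [List.range_succ]
      rw [hlin, hrhs]
      have h := ih hk x
      simp [List.count_append, List.count_cons, lin] at h ⊢
      omega

lemma count_cyc : ∀ m, 1 ≤ m → ∀ x : ℕ × ℕ,
    count x (cyclicEdges (Lnat m)) = count x (Enat m) := by
  intro m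
  induction m with
  | zero => omega
  | succ m ih =>
    intro _ x
    rcases Nat.eq_zero_or_pos m with rfl | hm
    · have h1 : Lnat 1 = [0, 1] := by rw [Lnat_succ 0, block_one]; simp [Lnat]
      have h2 : Enat 1 = [(0, 1), (1, 0)] := by simp [Enat, List.range_succ]
      rw [h1, h2, cyclicEdges_eq [0, 1] (by simp)]
      simp [lin]
    · obtain ⟨t, ht⟩ := Lnat_head m hm
      have hBne := block_ne_nil (m+1) (m+1) (by omega)
      have hLne := Lnat_ne_nil m hm
      have hne : Lnat (m+1) ≠ [] := Lnat_ne_nil (m+1) (by omega)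
      have hcyc : cyclicEdges (Lnat (m+1)) =
          lin (block (m+1) (m+1)) ++ ((m+1 : ℕ), (0 : ℕ)) :: cyclicEdges (Lnat m) := by
        rw [cyclicEdges_eq (Lnat (m+1)) hne, cyclicEdges_eq (Lnat m) hLne]
        have hlin : lin (Lnat (m+1)) =
            lin (block (m+1) (m+1)) ++ ((m+1 : ℕ), (0 : ℕ)) :: lin (Lnat m) := by
          conv_lhs => rw [Lnat_succ, ht]
          rw [lin_append (block (m+1) (m+1)) hBne 0 t,
            block_getLast (m+1) (m+1) (by omega) hBne, ← ht]
        have hgl1 : (Lnat (m+1)).getLast hne = 1 := Lnat_getLast (m+1) (by omega) hne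
        have hgl2 : (Lnat m).getLast hLne = 1 := Lnat_getLast m hm hLne
        have hhd1 : (Lnat (m+1)).head hne = 0 := by
          obtain ⟨t2, ht2⟩ := Lnat_head (m+1) (by omega)
          simp [List.head_eq_iff_head?_eq_some, ht2]
        have hhd2 : (Lnat m).head hLne = 0 := by
          simp [List.head_eq_iff_head?_eq_some, ht]
        rw [hlin, hgl1, hgl2, hhd1, hhd2]
        simp
      rw [hcyc, Enat_succ]
      have h1 := count_block_edges (m+1) (m+1) (by omega) x
      have h2 := ih hm x
      simp [List.count_append, List.count_cons] at h1 h2 ⊢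
      omega

end HierAux

namespace HierAux
open List

lemma count_blockE (p u v : ℕ) : ∀ k,
    count (u, v) ((List.range k).flatMap fun j => [(j, p), (p, j)]) =
      (if u < k ∧ v = p then 1 else 0) + (if v < k ∧ u = p then 1 else 0) := by
  intro k
  induction k with
  | zero => simp
  | succ k ih =>
    have hsp : ((List.range (k+1)).flatMap fun j => [(j, p), (p, j)]) =
        ((List.range k).flatMap fun j => [(j, p), (p, j)]) ++ [(k, p), (p, k)] := by
      simp [List.range_succ]
    rw [hsp, List.count_append, ih]
    simp [List.count_cons, Prod.ext_iff]
    split_ifs <;> omega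

lemma mem_Enat_le {m : ℕ} {x : ℕ × ℕ} (hx : x ∈ Enat m) : x.1 ≤ m ∧ x.2 ≤ m := by
  simp only [Enat, List.mem_flatMap, List.mem_reverse, List.mem_range] at hx
  obtain ⟨i, hi, j, hj, h⟩ := hx
  simp at h hj
  rcases h with h | h <;> subst h <;> constructor <;> simp <;> omega

lemma count_Enat : ∀ m u v, u ≤ m → v ≤ m → u ≠ v → count (u, v) (Enat m) = 1 := by
  intro m
  induction m with
  | zero => intro u v hu hv huv; omega
  | succ m ih =>
    intro u v hu hv huv
    rw [Enat_succ, List.count_append, count_blockE]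
    by_cases hcase : u ≤ m ∧ v ≤ m
    · rw [ih u v hcase.1 hcase.2 huv]
      split_ifs <;> omega
    · have h0 : count (u, v) (Enat m) = 0 := by
        rw [List.count_eq_zero]
        intro hmem
        have := mem_Enat_le hmem
        simp at this; omega
      rw [h0]
      split_ifs <;> omega

lemma mem_Lnat_le {m : ℕ} {x : ℕ} (hx : x ∈ Lnat m) : x ≤ m := by
  simp only [Lnat, List.mem_flatMap, List.mem_reverse, List.mem_range] at hx
  obtain ⟨i, hi, j, hj, h⟩ := hx
  simp at h hj
  omega

lemma mem_cyclicEdges {α : Type*} {L : List α} {x : α × α} (hx : x ∈ cyclicEdges L) :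
    x.1 ∈ L ∧ x.2 ∈ L := by
  obtain ⟨a, b⟩ := x
  have := List.of_mem_zip hx
  exact ⟨this.1, List.mem_rotate.mp this.2⟩

lemma cyclicEdges_map {α β : Type*} (f : α → β) (L : List α) :
    cyclicEdges (L.map f) = (cyclicEdges L).map (Prod.map f f) := by
  rw [cyclicEdges, cyclicEdges, ← List.map_rotate, List.zip_map]

end HierAux

namespace HierAux
open List

lemma block_length (p k : ℕ) : (block p k).length = 2 * k := by
  induction k with
  | zero => simp [block]
  | succ k ih => rw [block_succ]; simp [ih]; omega

lemma Lnat_length : ∀ m, (Lnat m).length = m * (m + 1) := by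
  intro m
  induction m with
  | zero => simp [Lnat]
  | succ m ih => rw [Lnat_succ]; simp [block_length, ih]; ring

end HierAux


/-- `L(σ)` has length `n(n−1)` and its cyclic edge sequence contains every
ordered pair of distinct vertices exactly once, i.e. it is the vertex list of an
Eulerian circuit of the complete digraph on `n` vertices. -/
theorem hierList_eulerian (n : ℕ) (hn : 2 ≤ n) (σ : Equiv.Perm (Fin n)) :
    (hierList n hn σ).length = n * (n - 1) ∧
    (∀ u v : Fin n, u ≠ v → (cyclicEdges (hierList n hn σ)).count (u, v) = 1) := by
  have hn0 : 0 < n := by omega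
  set f : ℕ → Fin n := fun k => σ ⟨k % n, Nat.mod_lt _ hn0⟩ with hf
  have hmap : hierList n hn σ = (HierAux.Lnat (n-1)).map f := by
    rw [hierList, HierAux.Lnat]
    simp [List.map_flatMap]
    rfl
  have hkey : ∀ (a : ℕ) (w : Fin n), a < n → (f a = w ↔ a = (σ.symm w : Fin n).val) := by
    intro a w ha
    simp only [hf, Equiv.apply_eq_iff_eq_symm_apply, Fin.ext_iff, Nat.mod_eq_of_lt ha]
  constructor
  · rw [hmap, List.length_map, HierAux.Lnat_length, show n - 1 + 1 = n by omega]
    cases n with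
    | zero => omega
    | succ m => simp [Nat.mul_comm]
  · intro u v huv
    rw [hmap, HierAux.cyclicEdges_map, List.count, List.countP_map]
    have hcongr : List.countP ((fun x => x == (u, v)) ∘ Prod.map f f)
          (cyclicEdges (HierAux.Lnat (n-1)))
        = List.count (((σ.symm u : Fin n) : ℕ), ((σ.symm v : Fin n) : ℕ))
          (cyclicEdges (HierAux.Lnat (n-1))) := by
      rw [List.count]
      apply List.countP_congr
      intro x hx
      obtain ⟨h1, h2⟩ := HierAux.mem_cyclicEdges hx
      have hx1 : x.1 < n := by have := HierAux.mem_Lnat_le h1; omega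
      have hx2 : x.2 < n := by have := HierAux.mem_Lnat_le h2; omega
      obtain ⟨a, b⟩ := x
      simp only [Function.comp, Prod.map, beq_iff_eq, Prod.mk.injEq]
      rw [hkey a u hx1, hkey b v hx2]
    rw [hcongr, HierAux.count_cyc (n-1) (by omega),
      HierAux.count_Enat (n-1) _ _ (by have := (σ.symm u).isLt; omega)
        (by have := (σ.symm v).isLt; omega)]
    intro h
    exact huv (by simpa using congrArg σ (Fin.ext h : σ.symm u = σ.symm v))
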